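/- In the braided Atiyah sequence setting, the map δ: P ⊗ Hom_B(T,P) → Hom_B(T,P) defined by (δ_Y ρ)(X) := [Y, ρ(X)] − (R_α▷ρ)([R^α▷Y^π, X]) is an action of the K-braided Lie algebra P; that is, it is K-equivariant, k ▷ (δ_Y ρ) = δ_{k₍₁₎▷Y}(k₍₂₎▷ρ), and it respects the braided bracket: δ_{[Y,Y']} = δ_Y ∘ δ_{Y'} − δ_{R_α▷Y'} ∘ δ_{R^α▷Y} for all Y, Y' ∈ P. -/

import Mathlib

/-!
STATEMENT 3: in the braided Atiyah sequence setting, the map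
`δ : P ⊗ Hom_B(T,P) → Hom_B(T,P)` defined by
`(δ_Y ρ)(X) := [Y, ρ(X)] − (R_α▷ρ)([R^α▷Y^π, X])`
is an action of the `K`-braided Lie algebra `P`; that is, it is
`K`-equivariant, `k ▷ (δ_Y ρ) = δ_{k₍₁₎▷Y}(k₍₂₎▷ρ)`, and it respects the
braided bracket: `δ_{[Y,Y']} = δ_Y ∘ δ_{Y'} − δ_{R_α▷Y'} ∘ δ_{R^α▷Y}` for all
`Y, Y' ∈ P`.

Setting: `(K,R)` is a triangular Hopf algebra over a field `k`, with `R`-matrix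
`R = Σ_i r1 i ⊗ r2 i = R^α ⊗ R_α`.  There is an exact sequence
`0 → g → P →^π T → 0` of `K`-braided Lie algebras: `B` is a quasi-commutative
`K`-module algebra; `P`, `T` are `B`-bimodules (left action `lP`, `lT`; the
right action is `Y·b := (R_α▷b)(R^α▷Y)`), with `π` a right `B`-module morphism
and a morphism of braided Lie algebras; `(B,T)` and `(B,P)` are braided
Lie–Rinehart pairs, `T = Der^R(B)` acting on `B` by braided derivations
(`actTB`) and `Y ∈ P` acting through `Y^π = π(Y)`.  `Hom_B(T,P)` is the space
of right `B`-linear maps with the adjoint `K`-action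
`(κ▷η)(X) = κ₍₁₎ ▷ η(S(κ₍₂₎) ▷ X)` (`adAct`).
-/

noncomputable section
open scoped TensorProduct BigOperators
open TensorProduct

namespace Statement3

variable {k : Type*} [Field k]
variable {K : Type*} [Ring K] [HopfAlgebra k K]
variable {M g : Type*} [AddCommGroup M] [Module k M] [AddCommGroup g] [Module k g]

/-- adjoint action of `κ ∈ K` on one-forms: `(κ▷η)(Y) = κ₍₁₎ ▷ η(S(κ₍₂₎) ▷ Y)` -/
def adAct (aM : K →ₗ[k] Module.End k M) (ag : K →ₗ[k] Module.End k g)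
    (κ : K) (η : M →ₗ[k] g) : M →ₗ[k] g :=
  TensorProduct.lift
    (LinearMap.mk₂ k (fun a c => ag a ∘ₗ η ∘ₗ aM (HopfAlgebra.antipode (R := k) c))
      (fun a a' c => by ext m; simp [map_smul])
      (fun s a c => by ext m; simp [map_smul])
      (fun a c c' => by ext m; simp [map_smul])
      (fun s a c => by ext m; simp [map_smul]))
    (Coalgebra.comul (R := k) κ)

lemma adAct_add (aM : K →ₗ[k] Module.End k M) (ag : K →ₗ[k] Module.End k g)
    (κ : K) (η η' : M →ₗ[k] g) :
    adAct aM ag κ (η + η') = adAct aM ag κ η + adAct aM ag κ η' := by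
  unfold adAct
  ext m
  induction Coalgebra.comul (R := k) κ using TensorProduct.induction_on with
  | zero => simp
  | tmul a c => simp
  | add x y hx hy => simp only [map_add, LinearMap.add_apply] at *; rw [hx, hy]; abel

lemma adAct_smul (aM : K →ₗ[k] Module.End k M) (ag : K →ₗ[k] Module.End k g)
    (κ : K) (s : k) (η : M →ₗ[k] g) :
    adAct aM ag κ (s • η) = s • adAct aM ag κ η := by
  unfold adAct
  ext m
  induction Coalgebra.comul (R := k) κ using TensorProduct.induction_on with
  | zero => simp
  | tmul a c => simp [map_smul]
  | add x y hx hy =>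
      simp only [map_add, LinearMap.add_apply, LinearMap.smul_apply, smul_add] at *
      rw [hx, hy]

/-- `κ ↦ [κ₍₁₎ ▷ u, κ₍₂₎ ▷ v]`, used to state `K`-equivariance of a bracket -/
def brAct (ag : K →ₗ[k] Module.End k g) (br : g →ₗ[k] g →ₗ[k] g)
    (u v : g) : K ⊗[k] K →ₗ[k] g :=
  TensorProduct.lift
    (LinearMap.mk₂ k (fun a c => br (ag a u) (ag c v))
      (fun a a' c => by simp [map_smul])
      (fun s a c => by simp [map_smul])
      (fun a c c' => by simp [map_smul])
      (fun s a c => by simp [map_smul]))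

/-- `κ ↦ (κ₍₁₎ ▷ b)(κ₍₂₎ ▷ b')`, used to state that an algebra is a
`K`-module algebra -/
def mulAct {B : Type*} [Ring B] [Algebra k B] (aB : K →ₗ[k] Module.End k B)
    (b b' : B) : K ⊗[k] K →ₗ[k] B :=
  TensorProduct.lift
    (LinearMap.mk₂ k (fun x y => aB x b * aB y b')
      (fun a a' c => by simp [map_smul, add_mul, smul_mul_assoc])
      (fun s a c => by simp [map_smul, smul_mul_assoc])
      (fun a c c' => by simp [map_smul, mul_add, mul_smul_comm])
      (fun s a c => by simp [map_smul, mul_smul_comm]))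

section AtiyahData

variable {ι B T P : Type*} [Fintype ι]
variable [Ring B] [Algebra k B] [AddCommGroup T] [Module k T] [AddCommGroup P] [Module k P]

/-- the right `B`-module structure `X·b := Σ_i (r2 i ▷ b)(r1 i ▷ X)` -/
def rMod (r1 r2 : ι → K) (aB : K →ₗ[k] Module.End k B)
    (lT : B →ₗ[k] Module.End k T) (aT : K →ₗ[k] Module.End k T)
    (X : T) (b : B) : T :=
  ∑ i, lT (aB (r2 i) b) (aT (r1 i) X)

/-- `(δ_Y ρ)(X) := [Y, ρ(X)] − Σ_i (r2 i ▷ ρ)([r1 i ▷ Y^π, X])` -/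
def delta (r1 r2 : ι → K)
    (aT : K →ₗ[k] Module.End k T) (aP : K →ₗ[k] Module.End k P)
    (brT : T →ₗ[k] T →ₗ[k] T) (brP : P →ₗ[k] P →ₗ[k] P) (π : P →ₗ[k] T)
    (Y : P) (ρ : T →ₗ[k] P) : T →ₗ[k] P :=
  (brP Y) ∘ₗ ρ - ∑ i, (adAct aT aP (r2 i) ρ) ∘ₗ (brT (aT (r1 i) (π Y)))

lemma delta_addY (r1 r2 : ι → K)
    (aT : K →ₗ[k] Module.End k T) (aP : K →ₗ[k] Module.End k P)
    (brT : T →ₗ[k] T →ₗ[k] T) (brP : P →ₗ[k] P →ₗ[k] P) (π : P →ₗ[k] T)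
    (Y Y' : P) (ρ : T →ₗ[k] P) :
    delta r1 r2 aT aP brT brP π (Y + Y') ρ
      = delta r1 r2 aT aP brT brP π Y ρ + delta r1 r2 aT aP brT brP π Y' ρ := by
  unfold delta
  ext x
  simp [map_add, Finset.sum_add_distrib]
  abel

lemma delta_smulY (r1 r2 : ι → K)
    (aT : K →ₗ[k] Module.End k T) (aP : K →ₗ[k] Module.End k P)
    (brT : T →ₗ[k] T →ₗ[k] T) (brP : P →ₗ[k] P →ₗ[k] P) (π : P →ₗ[k] T)
    (s : k) (Y : P) (ρ : T →ₗ[k] P) :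
    delta r1 r2 aT aP brT brP π (s • Y) ρ = s • delta r1 r2 aT aP brT brP π Y ρ := by
  unfold delta
  ext x
  simp [map_smul, smul_sub, Finset.smul_sum]

lemma delta_addRho (r1 r2 : ι → K)
    (aT : K →ₗ[k] Module.End k T) (aP : K →ₗ[k] Module.End k P)
    (brT : T →ₗ[k] T →ₗ[k] T) (brP : P →ₗ[k] P →ₗ[k] P) (π : P →ₗ[k] T)
    (Y : P) (ρ ρ' : T →ₗ[k] P) :
    delta r1 r2 aT aP brT brP π Y (ρ + ρ')
      = delta r1 r2 aT aP brT brP π Y ρ + delta r1 r2 aT aP brT brP π Y ρ' := by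
  unfold delta
  ext x
  simp [map_add, adAct_add, Finset.sum_add_distrib]
  abel

lemma delta_smulRho (r1 r2 : ι → K)
    (aT : K →ₗ[k] Module.End k T) (aP : K →ₗ[k] Module.End k P)
    (brT : T →ₗ[k] T →ₗ[k] T) (brP : P →ₗ[k] P →ₗ[k] P) (π : P →ₗ[k] T)
    (s : k) (Y : P) (ρ : T →ₗ[k] P) :
    delta r1 r2 aT aP brT brP π Y (s • ρ) = s • delta r1 r2 aT aP brT brP π Y ρ := by
  unfold delta
  ext x
  simp [map_smul, adAct_smul, smul_sub, Finset.smul_sum]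

/-- `κ ↦ δ_{κ₍₁₎ ▷ Y}(κ₍₂₎ ▷ ρ)`, used to state the `K`-equivariance of `δ` -/
def deltaAct (r1 r2 : ι → K)
    (aT : K →ₗ[k] Module.End k T) (aP : K →ₗ[k] Module.End k P)
    (brT : T →ₗ[k] T →ₗ[k] T) (brP : P →ₗ[k] P →ₗ[k] P) (π : P →ₗ[k] T)
    (Y : P) (ρ : T →ₗ[k] P) : K ⊗[k] K →ₗ[k] (T →ₗ[k] P) :=
  TensorProduct.lift
    (LinearMap.mk₂ k
      (fun a c => delta r1 r2 aT aP brT brP π (aP a Y) (adAct aT aP c ρ))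
      (fun a a' c => by simp [map_add, delta_addY])
      (fun s a c => by simp [map_smul, delta_smulY])
      (fun a c c' => by
        have : adAct aT aP (c + c') ρ = adAct aT aP c ρ + adAct aT aP c' ρ := by
          simp [adAct, map_add]
        simp [this, delta_addRho])
      (fun s a c => by
        have : adAct aT aP (s • c) ρ = s • adAct aT aP c ρ := by
          simp [adAct, map_smul]
        simp [this, delta_smulRho]))

end AtiyahData


/-! ### Auxiliary Hopf-algebra lemmas (antipode of `1` and of products) -/

section HopfAux

open Coalgebra

local notation "𝒮" => (HopfAlgebra.antipode (R := k) (A := K))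
local notation "μ" => LinearMap.mul' k K
local notation "Δ" => (Coalgebra.comul (R := k) (A := K))
local notation "ε" => (Coalgebra.counit (R := k) (A := K))

lemma antipode_one' : 𝒮 (1:K) = 1 := by
  have := HopfAlgebra.mul_antipode_rTensor_comul_apply (R:=k) (A:=K) (1:K)
  rw [Bialgebra.comul_one, Algebra.TensorProduct.one_def] at this
  simpa using this

lemma sum_counit_smul_eq (a : K) (r : Repr k a (K × K)) :
    ∑ i ∈ r.index, ε (r.left i) • r.right i = a := by
  have := congrArg (TensorProduct.lid k K) (Coalgebra.sum_counit_tmul_eq r)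
  simp only [map_sum, lid_tmul, lid_symm_apply] at this
  simpa using this

lemma sum_smul_counit_eq (a : K) (r : Repr k a (K × K)) :
    ∑ i ∈ r.index, ε (r.right i) • r.left i = a := by
  have := congrArg (TensorProduct.rid k K) (Coalgebra.sum_tmul_counit_eq r)
  simp only [map_sum, rid_tmul, rid_symm_apply] at this
  simpa using this


lemma sum_swap_blocks {M : Type*} [AddCommMonoid M]
    {ι₁ ι₂ : Type*} {κ₁ : ι₁ → Type*} {κ₂ : ι₂ → Type*}
    (s : Finset ι₁) (t : ∀ i, Finset (κ₁ i)) (u : Finset ι₂) (v : ∀ j, Finset (κ₂ j))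
    (f : ∀ i, κ₁ i → ∀ j, κ₂ j → M) :
    (∑ i ∈ s, ∑ i' ∈ t i, ∑ j ∈ u, ∑ j' ∈ v j, f i i' j j')
      = ∑ j ∈ u, ∑ j' ∈ v j, ∑ i ∈ s, ∑ i' ∈ t i, f i i' j j' := by
  calc (∑ i ∈ s, ∑ i' ∈ t i, ∑ j ∈ u, ∑ j' ∈ v j, f i i' j j')
      = ∑ i ∈ s, ∑ j ∈ u, ∑ i' ∈ t i, ∑ j' ∈ v j, f i i' j j' :=
        Finset.sum_congr rfl fun i _ => Finset.sum_comm
    _ = ∑ j ∈ u, ∑ i ∈ s, ∑ i' ∈ t i, ∑ j' ∈ v j, f i i' j j' := Finset.sum_comm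
    _ = ∑ j ∈ u, ∑ i ∈ s, ∑ j' ∈ v j, ∑ i' ∈ t i, f i i' j j' :=
        Finset.sum_congr rfl fun j _ => Finset.sum_congr rfl fun i _ => Finset.sum_comm
    _ = ∑ j ∈ u, ∑ j' ∈ v j, ∑ i ∈ s, ∑ i' ∈ t i, f i i' j j' :=
        Finset.sum_congr rfl fun j _ => Finset.sum_comm

lemma antipode_mul' (a b : K) : 𝒮 (a * b) = 𝒮 b * 𝒮 a := by
  classical
  set ra := ℛ k a with hra
  set rb := ℛ k b with hrb
  set ra1 : ∀ i : ra.ι, Repr k (ra.left i) (K × K) := fun i => ℛ k (ra.left i) with hra1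
  set ra2 : ∀ i : ra.ι, Repr k (ra.right i) (K × K) := fun i => ℛ k (ra.right i) with hra2
  set rb1 : ∀ j : rb.ι, Repr k (rb.left j) (K × K) := fun j => ℛ k (rb.left j) with hrb1
  set rb2 : ∀ j : rb.ι, Repr k (rb.right j) (K × K) := fun j => ℛ k (rb.right j) with hrb2
  -- the pivot quadruple sum, "right-split" form, order (i,i',j,j')
  have evalL :
      (∑ i ∈ ra.index, ∑ i' ∈ (ra2 i).index, ∑ j ∈ rb.index, ∑ j' ∈ (rb2 j).index,
        𝒮 (ra.left i * rb.left j) *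
          ((ra2 i).left i' * (((rb2 j).left j' * 𝒮 ((rb2 j).right j')) * 𝒮 ((ra2 i).right i'))))
      = 𝒮 (a * b) := by
    have step1 : ∀ i i',
        (∑ j ∈ rb.index, ∑ j' ∈ (rb2 j).index,
          𝒮 (ra.left i * rb.left j) *
            ((ra2 i).left i' * (((rb2 j).left j' * 𝒮 ((rb2 j).right j')) * 𝒮 ((ra2 i).right i'))))
        = 𝒮 (ra.left i * b) * ((ra2 i).left i' * 𝒮 ((ra2 i).right i')) := by
      intro i i'
      have : ∀ j, (∑ j' ∈ (rb2 j).index,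
          𝒮 (ra.left i * rb.left j) *
            ((ra2 i).left i' * (((rb2 j).left j' * 𝒮 ((rb2 j).right j')) * 𝒮 ((ra2 i).right i'))))
          = ε (rb.right j) •
            (𝒮 (ra.left i * rb.left j) * ((ra2 i).left i' * 𝒮 ((ra2 i).right i'))) := by
        intro j
        rw [← Finset.mul_sum, ← Finset.mul_sum, ← Finset.sum_mul,
          HopfAlgebra.sum_mul_antipode_eq_smul (rb2 j)]
        simp [smul_mul_assoc, mul_smul_comm]
      rw [Finset.sum_congr rfl fun j _ => this j]
      have : (∑ j ∈ rb.index, ε (rb.right j) •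
          (𝒮 (ra.left i * rb.left j) * ((ra2 i).left i' * 𝒮 ((ra2 i).right i'))))
          = (∑ j ∈ rb.index, 𝒮 (ra.left i * (ε (rb.right j) • rb.left j))) *
              ((ra2 i).left i' * 𝒮 ((ra2 i).right i')) := by
        rw [Finset.sum_mul]
        refine Finset.sum_congr rfl fun j _ => ?_
        simp [smul_mul_assoc, mul_smul_comm]
      rw [this, ← map_sum, ← Finset.mul_sum, sum_smul_counit_eq b rb]
    calc (∑ i ∈ ra.index, ∑ i' ∈ (ra2 i).index, ∑ j ∈ rb.index, ∑ j' ∈ (rb2 j).index,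
        𝒮 (ra.left i * rb.left j) *
          ((ra2 i).left i' * (((rb2 j).left j' * 𝒮 ((rb2 j).right j')) * 𝒮 ((ra2 i).right i'))))
        = ∑ i ∈ ra.index, ∑ i' ∈ (ra2 i).index,
            𝒮 (ra.left i * b) * ((ra2 i).left i' * 𝒮 ((ra2 i).right i')) := by
          exact Finset.sum_congr rfl fun i _ => Finset.sum_congr rfl fun i' _ => step1 i i'
      _ = ∑ i ∈ ra.index, ε (ra.right i) • 𝒮 (ra.left i * b) := by
          refine Finset.sum_congr rfl fun i _ => ?_
          rw [← Finset.mul_sum, HopfAlgebra.sum_mul_antipode_eq_smul (ra2 i)]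
          simp [mul_smul_comm]
      _ = 𝒮 (a * b) := by
          have : (∑ i ∈ ra.index, ε (ra.right i) • 𝒮 (ra.left i * b))
              = 𝒮 ((∑ i ∈ ra.index, ε (ra.right i) • ra.left i) * b) := by
            rw [Finset.sum_mul, map_sum]
            refine Finset.sum_congr rfl fun i _ => ?_
            simp [smul_mul_assoc]
          rw [this, sum_smul_counit_eq a ra]

  have evalR :
      (∑ i ∈ ra.index, ∑ i' ∈ (ra2 i).index, ∑ j ∈ rb.index, ∑ j' ∈ (rb2 j).index,
        𝒮 (ra.left i * rb.left j) *
          ((ra2 i).left i' * (((rb2 j).left j' * 𝒮 ((rb2 j).right j')) * 𝒮 ((ra2 i).right i'))))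
      = 𝒮 b * 𝒮 a := by
    rw [sum_swap_blocks]
    -- Stage A : re-associate the `a`-side comultiplication (per fixed j, j')
    have stageA : ∀ j ∈ rb.index, ∀ j' ∈ (rb2 j).index,
        (∑ i ∈ ra.index, ∑ i' ∈ (ra2 i).index,
          𝒮 (ra.left i * rb.left j) *
            ((ra2 i).left i' * (((rb2 j).left j' * 𝒮 ((rb2 j).right j')) * 𝒮 ((ra2 i).right i'))))
        = ∑ i ∈ ra.index, ∑ i' ∈ (ra1 i).index,
            𝒮 ((ra1 i).left i' * rb.left j) *
              ((ra1 i).right i' * (((rb2 j).left j' * 𝒮 ((rb2 j).right j')) * 𝒮 (ra.right i))) := by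
      intro j _ j' _
      have key := congrArg
        (μ ∘ₗ map (𝒮 ∘ₗ LinearMap.mulRight k (rb.left j))
          (μ ∘ₗ map LinearMap.id
            (LinearMap.mulLeft k ((rb2 j).left j' * 𝒮 ((rb2 j).right j')) ∘ₗ 𝒮)))
        (Coalgebra.sum_tmul_tmul_eq ra ra1 ra2)
      simpa only [map_sum, LinearMap.coe_comp, Function.comp_apply,
        map_tmul, LinearMap.mul'_apply, LinearMap.mulLeft_apply, LinearMap.mulRight_apply,
        LinearMap.id_coe, id_eq] using key.symm
    rw [Finset.sum_congr rfl fun j hj => Finset.sum_congr rfl fun j' hj' => stageA j hj j' hj']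
    rw [← sum_swap_blocks]
    -- Stage B : re-associate the `b`-side comultiplication (per fixed i, i')
    have stageB : ∀ i ∈ ra.index, ∀ i' ∈ (ra1 i).index,
        (∑ j ∈ rb.index, ∑ j' ∈ (rb2 j).index,
          𝒮 ((ra1 i).left i' * rb.left j) *
            ((ra1 i).right i' * (((rb2 j).left j' * 𝒮 ((rb2 j).right j')) * 𝒮 (ra.right i))))
        = ∑ j ∈ rb.index, ∑ j' ∈ (rb1 j).index,
            𝒮 ((ra1 i).left i' * (rb1 j).left j') *
              ((ra1 i).right i' * (((rb1 j).right j' * 𝒮 (rb.right j)) * 𝒮 (ra.right i))) := by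
      intro i _ i' _
      have key := congrArg
        (μ ∘ₗ map (𝒮 ∘ₗ LinearMap.mulLeft k ((ra1 i).left i'))
          (LinearMap.mulLeft k ((ra1 i).right i') ∘ₗ
            LinearMap.mulRight k (𝒮 (ra.right i)) ∘ₗ μ ∘ₗ map LinearMap.id 𝒮))
        (Coalgebra.sum_tmul_tmul_eq rb rb1 rb2)
      simpa only [map_sum, LinearMap.coe_comp, Function.comp_apply,
        map_tmul, LinearMap.mul'_apply, LinearMap.mulLeft_apply, LinearMap.mulRight_apply,
        LinearMap.id_coe, id_eq] using key.symm
    rw [Finset.sum_congr rfl fun i hi => Finset.sum_congr rfl fun i' hi' => stageB i hi i' hi']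
    -- reorder : per i, swap the i' and j sums
    rw [Finset.sum_congr rfl fun i _ => Finset.sum_comm]
    -- collapse the inner (i', j') double sums
    have collapse : ∀ i ∈ ra.index, ∀ j ∈ rb.index,
        (∑ i' ∈ (ra1 i).index, ∑ j' ∈ (rb1 j).index,
          𝒮 ((ra1 i).left i' * (rb1 j).left j') *
            ((ra1 i).right i' * (((rb1 j).right j' * 𝒮 (rb.right j)) * 𝒮 (ra.right i))))
        = (ε (ra.left i) * ε (rb.left j)) • (𝒮 (rb.right j) * 𝒮 (ra.right i)) := by
      intro i _ j _
      have hcm : (∑ i' ∈ (ra1 i).index, ∑ j' ∈ (rb1 j).index,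
          ((ra1 i).left i' * (rb1 j).left j') ⊗ₜ[k] ((ra1 i).right i' * (rb1 j).right j'))
          = Δ (ra.left i * rb.left j) := by
        rw [Bialgebra.comul_mul, ← (ra1 i).eq, ← (rb1 j).eq, Finset.sum_mul_sum]
        simp [Algebra.TensorProduct.tmul_mul_tmul]
      have key2 := congrArg (μ ∘ₗ LinearMap.rTensor K 𝒮) hcm
      simp only [map_sum, LinearMap.coe_comp, Function.comp_apply, LinearMap.rTensor_tmul,
        LinearMap.mul'_apply, HopfAlgebra.mul_antipode_rTensor_comul_apply] at key2
      calc (∑ i' ∈ (ra1 i).index, ∑ j' ∈ (rb1 j).index,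
          𝒮 ((ra1 i).left i' * (rb1 j).left j') *
            ((ra1 i).right i' * (((rb1 j).right j' * 𝒮 (rb.right j)) * 𝒮 (ra.right i))))
          = ∑ i' ∈ (ra1 i).index, ∑ j' ∈ (rb1 j).index,
            (𝒮 ((ra1 i).left i' * (rb1 j).left j') *
              ((ra1 i).right i' * (rb1 j).right j')) * (𝒮 (rb.right j) * 𝒮 (ra.right i)) := by
            refine Finset.sum_congr rfl fun i' _ => Finset.sum_congr rfl fun j' _ => ?_
            simp only [mul_assoc]
        _ = (∑ i' ∈ (ra1 i).index, ∑ j' ∈ (rb1 j).index,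
              𝒮 ((ra1 i).left i' * (rb1 j).left j') *
                ((ra1 i).right i' * (rb1 j).right j')) * (𝒮 (rb.right j) * 𝒮 (ra.right i)) := by
            rw [Finset.sum_mul]
            exact Finset.sum_congr rfl fun i' _ => (Finset.sum_mul _ _ _).symm
        _ = (ε (ra.left i) * ε (rb.left j)) • (𝒮 (rb.right j) * 𝒮 (ra.right i)) := by
            rw [key2, Bialgebra.counit_mul, Algebra.algebraMap_eq_smul_one]
            rw [smul_mul_assoc, one_mul]
    rw [Finset.sum_congr rfl fun i hi => Finset.sum_congr rfl fun j hj => collapse i hi j hj]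
    -- final assembly
    have hb : (∑ j ∈ rb.index, ε (rb.left j) • 𝒮 (rb.right j)) = 𝒮 b := by
      calc (∑ j ∈ rb.index, ε (rb.left j) • 𝒮 (rb.right j))
          = 𝒮 (∑ j ∈ rb.index, ε (rb.left j) • rb.right j) := by
            rw [map_sum]; simp only [map_smul]
        _ = 𝒮 b := by rw [sum_counit_smul_eq b rb]
    have ha : (∑ i ∈ ra.index, ε (ra.left i) • 𝒮 (ra.right i)) = 𝒮 a := by
      calc (∑ i ∈ ra.index, ε (ra.left i) • 𝒮 (ra.right i))
          = 𝒮 (∑ i ∈ ra.index, ε (ra.left i) • ra.right i) := by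
            rw [map_sum]; simp only [map_smul]
        _ = 𝒮 a := by rw [sum_counit_smul_eq a ra]
    calc (∑ i ∈ ra.index, ∑ j ∈ rb.index,
          (ε (ra.left i) * ε (rb.left j)) • (𝒮 (rb.right j) * 𝒮 (ra.right i)))
        = ∑ i ∈ ra.index, ε (ra.left i) • (𝒮 b * 𝒮 (ra.right i)) := by
          refine Finset.sum_congr rfl fun i _ => ?_
          have : ∀ j, (ε (ra.left i) * ε (rb.left j)) • (𝒮 (rb.right j) * 𝒮 (ra.right i))
              = ε (ra.left i) • ((ε (rb.left j) • 𝒮 (rb.right j)) * 𝒮 (ra.right i)) :=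
            fun j => by rw [mul_smul, smul_mul_assoc]
          rw [Finset.sum_congr rfl fun j _ => this j, ← Finset.smul_sum, ← Finset.sum_mul, hb]
      _ = 𝒮 b * 𝒮 a := by
          have : ∀ i, ε (ra.left i) • (𝒮 b * 𝒮 (ra.right i))
              = 𝒮 b * (ε (ra.left i) • 𝒮 (ra.right i)) := fun i => by rw [mul_smul_comm]
          rw [Finset.sum_congr rfl fun i _ => this i, ← Finset.mul_sum, ha]
  rw [← evalL, evalR]


end HopfAux


/-! ### Auxiliary lemmas about the adjoint action `adAct` -/

section AdActAux

open Coalgebra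

local notation "𝒮" => (HopfAlgebra.antipode (R := k) (A := K))
local notation "μ" => LinearMap.mul' k K

variable {T P : Type*} [AddCommGroup T] [Module k T] [AddCommGroup P] [Module k P]

/-- `κ ↦ κ ▷ η` as a linear map in `κ` -/
def adActL (aT : K →ₗ[k] Module.End k T) (aP : K →ₗ[k] Module.End k P)
    (η : T →ₗ[k] P) : K →ₗ[k] (T →ₗ[k] P) where
  toFun κ := adAct aT aP κ η
  map_add' x y := by simp [adAct, map_add]
  map_smul' s x := by simp [adAct, map_smul]

@[simp] lemma adActL_apply (aT : K →ₗ[k] Module.End k T) (aP : K →ₗ[k] Module.End k P)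
    (η : T →ₗ[k] P) (κ : K) : adActL aT aP η κ = adAct aT aP κ η := rfl

/-- `η ↦ κ ▷ η` as a linear map in `η` -/
def adActR (aT : K →ₗ[k] Module.End k T) (aP : K →ₗ[k] Module.End k P)
    (κ : K) : (T →ₗ[k] P) →ₗ[k] (T →ₗ[k] P) where
  toFun η := adAct aT aP κ η
  map_add' η η' := adAct_add aT aP κ η η'
  map_smul' s η := by simpa using adAct_smul aT aP κ s η

@[simp] lemma adActR_apply (aT : K →ₗ[k] Module.End k T) (aP : K →ₗ[k] Module.End k P)
    (κ : K) (η : T →ₗ[k] P) : adActR aT aP κ η = adAct aT aP κ η := rfl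

lemma adAct_repr (aT : K →ₗ[k] Module.End k T) (aP : K →ₗ[k] Module.End k P)
    (κ : K) (r : Repr k κ (K × K)) (η : T →ₗ[k] P) :
    adAct aT aP κ η = ∑ i ∈ r.index, aP (r.left i) ∘ₗ η ∘ₗ aT (𝒮 (r.right i)) := by
  unfold adAct
  rw [← r.eq]
  simp

lemma brAct_eval {V : Type*} [AddCommGroup V] [Module k V]
    (aV : K →ₗ[k] Module.End k V) (br : V →ₗ[k] V →ₗ[k] V) (u v : V)
    (κ : K) (r : Repr k κ (K × K)) :
    brAct aV br u v (Coalgebra.comul (R := k) κ)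
      = ∑ i ∈ r.index, br (aV (r.left i) u) (aV (r.right i) v) := by
  rw [← r.eq]
  simp [brAct]

lemma adAct_one' (aT : K →ₗ[k] Module.End k T) (aP : K →ₗ[k] Module.End k P)
    (haT1 : aT 1 = 1) (haP1 : aP 1 = 1) (η : T →ₗ[k] P) :
    adAct aT aP (1 : K) η = η := by
  unfold adAct
  rw [Bialgebra.comul_one, Algebra.TensorProduct.one_def]
  ext X
  simp [antipode_one', haT1, haP1]

lemma adAct_mul' (aT : K →ₗ[k] Module.End k T) (aP : K →ₗ[k] Module.End k P)
    (haTm : ∀ x y : K, aT (x * y) = aT x * aT y)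
    (haPm : ∀ x y : K, aP (x * y) = aP x * aP y)
    (x y : K) (η : T →ₗ[k] P) :
    adAct aT aP (x * y) η = adAct aT aP x (adAct aT aP y η) := by
  classical
  set rx := ℛ k x with hrx
  set ry := ℛ k y with hry
  have hxy : (∑ i ∈ rx.index, ∑ j ∈ ry.index,
      (rx.left i * ry.left j) ⊗ₜ[k] (rx.right i * ry.right j))
      = Coalgebra.comul (R := k) (x * y) := by
    rw [Bialgebra.comul_mul, ← rx.eq, ← ry.eq, Finset.sum_mul_sum]
    simp [Algebra.TensorProduct.tmul_mul_tmul]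
  have hL : adAct aT aP (x * y) η = ∑ i ∈ rx.index, ∑ j ∈ ry.index,
      aP (rx.left i * ry.left j) ∘ₗ η ∘ₗ aT (𝒮 (rx.right i * ry.right j)) := by
    unfold adAct
    rw [← hxy]
    simp
  rw [hL, adAct_repr aT aP x rx]
  ext v
  simp only [LinearMap.sum_apply, LinearMap.coe_comp, Function.comp_apply]
  refine Finset.sum_congr rfl fun i _ => ?_
  rw [adAct_repr aT aP y ry]
  simp only [LinearMap.sum_apply, LinearMap.coe_comp, Function.comp_apply, map_sum,
    antipode_mul', haTm, haPm, Module.End.mul_apply]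

lemma adAct_ev (aT : K →ₗ[k] Module.End k T) (aP : K →ₗ[k] Module.End k P)
    (haT1 : aT 1 = 1) (haTm : ∀ x y : K, aT (x * y) = aT x * aT y)
    (κ : K) (r : Repr k κ (K × K)) (η : T →ₗ[k] P) (X : T) :
    (∑ i ∈ r.index, (adAct aT aP (r.left i) η) (aT (r.right i) X)) = aP κ (η X) := by
  classical
  set r1 : ∀ i : r.ι, Repr k (r.left i) (K × K) := fun i => ℛ k (r.left i) with hr1
  set r2 : ∀ i : r.ι, Repr k (r.right i) (K × K) := fun i => ℛ k (r.right i) with hr2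
  have expand : ∀ i ∈ r.index, (adAct aT aP (r.left i) η) (aT (r.right i) X)
      = ∑ j ∈ (r1 i).index,
          aP ((r1 i).left j) (η (aT (𝒮 ((r1 i).right j) * r.right i) X)) := by
    intro i _
    rw [adAct_repr aT aP (r.left i) (r1 i)]
    simp [haTm, Module.End.mul_apply]
  rw [Finset.sum_congr rfl expand]
  have key := congrArg
    (TensorProduct.lift aP ∘ₗ LinearMap.lTensor K
      (η ∘ₗ ((aT).flip X) ∘ₗ μ ∘ₗ TensorProduct.map 𝒮 LinearMap.id))
    (Coalgebra.sum_tmul_tmul_eq r r1 r2)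
  simp only [map_sum, LinearMap.coe_comp, Function.comp_apply, LinearMap.lTensor_tmul,
    TensorProduct.map_tmul, LinearMap.mul'_apply, LinearMap.id_coe, id_eq,
    TensorProduct.lift.tmul, LinearMap.flip_apply] at key
  rw [key]
  have coll : ∀ i ∈ r.index,
      (∑ j ∈ (r2 i).index,
        aP (r.left i) (η (aT (𝒮 ((r2 i).left j) * (r2 i).right j) X)))
      = Coalgebra.counit (R := k) (r.right i) • aP (r.left i) (η X) := by
    intro i _
    have h0 : (∑ j ∈ (r2 i).index, aT (𝒮 ((r2 i).left j) * (r2 i).right j) X)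
        = Coalgebra.counit (R := k) (r.right i) • X := by
      rw [← LinearMap.sum_apply, ← map_sum, HopfAlgebra.sum_antipode_mul_eq_smul (r2 i),
        map_smul, haT1]
      simp
    rw [← map_sum, ← map_sum, h0, map_smul, map_smul]
  rw [Finset.sum_congr rfl coll]
  have : (∑ i ∈ r.index, Coalgebra.counit (R := k) (r.right i) • aP (r.left i) (η X))
      = aP (∑ i ∈ r.index, Coalgebra.counit (R := k) (r.right i) • r.left i) (η X) := by
    rw [map_sum, LinearMap.sum_apply]
    exact Finset.sum_congr rfl fun i _ => by rw [map_smul]; simp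
  rw [this, sum_smul_counit_eq κ r]


lemma adAct_brP_comp (aT : K →ₗ[k] Module.End k T) (aP : K →ₗ[k] Module.End k P)
    (brP : P →ₗ[k] P →ₗ[k] P)
    (hPequiv : ∀ (κ : K) (u v : P),
      aP κ (brP u v) = brAct aP brP u v (Coalgebra.comul (R := k) κ))
    (κ : K) (r : Repr k κ (K × K)) (Y : P) (ρ : T →ₗ[k] P) :
    adAct aT aP κ (brP Y ∘ₗ ρ)
      = ∑ i ∈ r.index, brP (aP (r.left i) Y) ∘ₗ adAct aT aP (r.right i) ρ := by
  classical
  ext X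
  set r1 : ∀ i : r.ι, Repr k (r.left i) (K × K) := fun i => ℛ k (r.left i) with hr1
  set s : ∀ i : r.ι, Repr k (r.right i) (K × K) := fun i => ℛ k (r.right i) with hs
  have hR : (∑ i ∈ r.index, brP (aP (r.left i) Y) ∘ₗ adAct aT aP (r.right i) ρ) X
      = ∑ i ∈ r.index, ∑ j ∈ (s i).index,
          brP (aP (r.left i) Y) (aP ((s i).left j) (ρ (aT (𝒮 ((s i).right j)) X))) := by
    rw [LinearMap.sum_apply]
    refine Finset.sum_congr rfl fun i _ => ?_
    rw [LinearMap.comp_apply, adAct_repr aT aP (r.right i) (s i)]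
    simp [map_sum]
  rw [hR]
  have key := congrArg
    (TensorProduct.lift brP ∘ₗ TensorProduct.map ((aP).flip Y)
      (TensorProduct.lift aP ∘ₗ LinearMap.lTensor K (ρ ∘ₗ ((aT).flip X) ∘ₗ 𝒮)))
    (Coalgebra.sum_tmul_tmul_eq r r1 s)
  simp only [map_sum, LinearMap.coe_comp, Function.comp_apply, TensorProduct.map_tmul,
    LinearMap.lTensor_tmul, TensorProduct.lift.tmul, LinearMap.flip_apply] at key
  rw [← key]
  have coll : ∀ i ∈ r.index,
      (∑ j ∈ (r1 i).index,
        brP (aP ((r1 i).left j) Y)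
          (aP ((r1 i).right j) (ρ (aT (𝒮 (r.right i)) X))))
      = aP (r.left i) (brP Y (ρ (aT (𝒮 (r.right i)) X))) := by
    intro i _
    rw [hPequiv (r.left i) Y (ρ (aT (𝒮 (r.right i)) X)),
      brAct_eval aP brP Y _ (r.left i) (r1 i)]
  rw [Finset.sum_congr rfl coll, adAct_repr aT aP κ r]
  simp

lemma adAct_comp_brT (aT : K →ₗ[k] Module.End k T) (aP : K →ₗ[k] Module.End k P)
    (haT1 : aT 1 = 1) (haTm : ∀ x y : K, aT (x * y) = aT x * aT y)
    (brT : T →ₗ[k] T →ₗ[k] T)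
    (hTequiv : ∀ (κ : K) (u v : T),
      aT κ (brT u v) = brAct aT brT u v (Coalgebra.comul (R := k) κ))
    (κ : K) (r : Repr k κ (K × K)) (η : T →ₗ[k] P) (Z : T) :
    adAct aT aP κ (η ∘ₗ brT Z)
      = ∑ i ∈ r.index, (adAct aT aP (r.left i) η) ∘ₗ brT (aT (r.right i) Z) := by
  classical
  ext X
  set r1 : ∀ i : r.ι, Repr k (r.left i) (K × K) := fun i => ℛ k (r.left i) with hr1
  set s : ∀ i : r.ι, Repr k (r.right i) (K × K) := fun i => ℛ k (r.right i) with hs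
  set u : ∀ (i : r.ι) (j : (s i).ι), Repr k ((s i).left j) (K × K) :=
    fun i j => ℛ k ((s i).left j) with hu
  set v : ∀ (i : r.ι) (j : (s i).ι), Repr k ((s i).right j) (K × K) :=
    fun i j => ℛ k ((s i).right j) with hv
  have hstep : ∀ i ∈ r.index, brT (aT (r.right i) Z) X
      = ∑ j ∈ (s i).index, aT ((s i).left j) (brT Z (aT (𝒮 ((s i).right j)) X)) := by
    intro i _
    -- step 1 : undo an antipode collapse
    have h1 : brT (aT (r.right i) Z) X
        = ∑ j ∈ (s i).index, ∑ m ∈ (v i j).index,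
            brT (aT ((s i).left j) Z)
              (aT ((v i j).left m * 𝒮 ((v i j).right m)) X) := by
      have inner : ∀ j ∈ (s i).index,
          (∑ m ∈ (v i j).index,
            brT (aT ((s i).left j) Z) (aT ((v i j).left m * 𝒮 ((v i j).right m)) X))
          = Coalgebra.counit (R := k) ((s i).right j) •
              brT (aT ((s i).left j) Z) X := by
        intro j _
        rw [← map_sum, ← LinearMap.sum_apply, ← map_sum,
          HopfAlgebra.sum_mul_antipode_eq_smul (v i j), map_smul]
        simp [haT1]
      rw [Finset.sum_congr rfl inner]
      conv_lhs => rw [← sum_smul_counit_eq (r.right i) (s i)]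
      simp [map_sum, map_smul, Finset.smul_sum]
    rw [h1]
    -- step 2 : coassociativity transport on the inner comultiplication
    have key := congrArg
      (TensorProduct.lift brT ∘ₗ TensorProduct.map ((aT).flip Z)
        (((aT).flip X) ∘ₗ μ ∘ₗ TensorProduct.map LinearMap.id 𝒮))
      (Coalgebra.sum_tmul_tmul_eq (s i) (u i) (v i))
    simp only [map_sum, LinearMap.coe_comp, Function.comp_apply, TensorProduct.map_tmul,
      LinearMap.mul'_apply, LinearMap.id_coe, id_eq, TensorProduct.lift.tmul,
      LinearMap.flip_apply] at key
    rw [← key]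
    -- step 3 : recognise the equivariance of the bracket
    refine Finset.sum_congr rfl fun j _ => ?_
    rw [hTequiv ((s i).left j) Z (aT (𝒮 ((s i).right j)) X),
      brAct_eval aT brT Z _ ((s i).left j) (u i j)]
    refine Finset.sum_congr rfl fun m _ => ?_
    rw [haTm ((u i j).right m) (𝒮 ((s i).right j))]
    simp [Module.End.mul_apply]
  rw [LinearMap.sum_apply]
  symm
  calc (∑ i ∈ r.index, ((adAct aT aP (r.left i) η) ∘ₗ brT (aT (r.right i) Z)) X)
      = ∑ i ∈ r.index, ∑ j ∈ (s i).index,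
          (adAct aT aP (r.left i) η)
            (aT ((s i).left j) (brT Z (aT (𝒮 ((s i).right j)) X))) := by
        refine Finset.sum_congr rfl fun i hi => ?_
        rw [LinearMap.comp_apply, hstep i hi, map_sum]
    _ = ∑ i ∈ r.index, ∑ j ∈ (r1 i).index,
          (adAct aT aP ((r1 i).left j) η)
            (aT ((r1 i).right j) (brT Z (aT (𝒮 (r.right i)) X))) := by
        have key := congrArg
          (TensorProduct.lift (adActL aT aP η) ∘ₗ LinearMap.lTensor K
            (TensorProduct.lift aT ∘ₗ LinearMap.lTensor K
              ((brT Z) ∘ₗ ((aT).flip X) ∘ₗ 𝒮)))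
          (Coalgebra.sum_tmul_tmul_eq r r1 s)
        simp only [map_sum, LinearMap.coe_comp, Function.comp_apply, LinearMap.lTensor_tmul,
          TensorProduct.lift.tmul, LinearMap.flip_apply, adActL_apply] at key
        rw [← key]
    _ = ∑ i ∈ r.index, aP (r.left i) (η (brT Z (aT (𝒮 (r.right i)) X))) := by
        refine Finset.sum_congr rfl fun i _ => ?_
        exact adAct_ev aT aP haT1 haTm (r.left i) (r1 i) η _
    _ = (adAct aT aP κ (η ∘ₗ brT Z)) X := by
        rw [adAct_repr aT aP κ r]
        simp

end AdActAux


/-! ### Auxiliary lemmas about `delta` and the equivariance of `delta` -/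

section DeltaAux

open Coalgebra

variable {ι T P : Type*} [Fintype ι]
variable [AddCommGroup T] [Module k T] [AddCommGroup P] [Module k P]

lemma delta_def (r1 r2 : ι → K)
    (aT : K →ₗ[k] Module.End k T) (aP : K →ₗ[k] Module.End k P)
    (brT : T →ₗ[k] T →ₗ[k] T) (brP : P →ₗ[k] P →ₗ[k] P) (π : P →ₗ[k] T)
    (Y : P) (ρ : T →ₗ[k] P) :
    delta r1 r2 aT aP brT brP π Y ρ
      = (brP Y) ∘ₗ ρ - ∑ i, (adAct aT aP (r2 i) ρ) ∘ₗ (brT (aT (r1 i) (π Y))) := rfl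

lemma delta_apply (r1 r2 : ι → K)
    (aT : K →ₗ[k] Module.End k T) (aP : K →ₗ[k] Module.End k P)
    (brT : T →ₗ[k] T →ₗ[k] T) (brP : P →ₗ[k] P →ₗ[k] P) (π : P →ₗ[k] T)
    (Y : P) (ρ : T →ₗ[k] P) (X : T) :
    delta r1 r2 aT aP brT brP π Y ρ X
      = brP Y (ρ X) - ∑ i, (adAct aT aP (r2 i) ρ) (brT (aT (r1 i) (π Y)) X) := by
  simp [delta_def]

lemma deltaAct_comul (r1 r2 : ι → K)
    (aT : K →ₗ[k] Module.End k T) (aP : K →ₗ[k] Module.End k P)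
    (brT : T →ₗ[k] T →ₗ[k] T) (brP : P →ₗ[k] P →ₗ[k] P) (π : P →ₗ[k] T)
    (Y : P) (ρ : T →ₗ[k] P) (κ : K) (r : Repr k κ (K × K)) :
    deltaAct r1 r2 aT aP brT brP π Y ρ (Coalgebra.comul (R := k) κ)
      = ∑ i ∈ r.index,
          delta r1 r2 aT aP brT brP π (aP (r.left i) Y) (adAct aT aP (r.right i) ρ) := by
  rw [← r.eq]
  simp [deltaAct]

lemma deltaAct_tmul (r1 r2 : ι → K)
    (aT : K →ₗ[k] Module.End k T) (aP : K →ₗ[k] Module.End k P)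
    (brT : T →ₗ[k] T →ₗ[k] T) (brP : P →ₗ[k] P →ₗ[k] P) (π : P →ₗ[k] T)
    (Y : P) (ρ : T →ₗ[k] P) (a c : K) :
    deltaAct r1 r2 aT aP brT brP π Y ρ (a ⊗ₜ[k] c)
      = delta r1 r2 aT aP brT brP π (aP a Y) (adAct aT aP c ρ) := by
  simp [deltaAct]

/-- Part (i) : `K`-equivariance of `delta`. -/
lemma delta_equivariant (r1 r2 : ι → K)
    (hqc : ∀ x : K,
      (TensorProduct.comm k K K) (Coalgebra.comul (R := k) x) * (∑ i, r1 i ⊗ₜ[k] r2 i)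
        = (∑ i, r1 i ⊗ₜ[k] r2 i) * Coalgebra.comul (R := k) x)
    (aT : K →ₗ[k] Module.End k T)
    (haT1 : aT 1 = 1) (haTm : ∀ x y : K, aT (x * y) = aT x * aT y)
    (aP : K →ₗ[k] Module.End k P)
    (haPm : ∀ x y : K, aP (x * y) = aP x * aP y)
    (brT : T →ₗ[k] T →ₗ[k] T)
    (hTequiv : ∀ (κ : K) (u v : T),
      aT κ (brT u v) = brAct aT brT u v (Coalgebra.comul (R := k) κ))
    (brP : P →ₗ[k] P →ₗ[k] P)
    (hPequiv : ∀ (κ : K) (u v : P),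
      aP κ (brP u v) = brAct aP brP u v (Coalgebra.comul (R := k) κ))
    (π : P →ₗ[k] T)
    (hπequiv : ∀ (κ : K) (Y : P), π (aP κ Y) = aT κ (π Y))
    (κ : K) (r : Repr k κ (K × K)) (Y : P) (ρ : T →ₗ[k] P) :
    adAct aT aP κ (delta r1 r2 aT aP brT brP π Y ρ)
      = ∑ i ∈ r.index,
          delta r1 r2 aT aP brT brP π (aP (r.left i) Y) (adAct aT aP (r.right i) ρ) := by
  classical
  -- expand the left hand side
  have hL : adAct aT aP κ (delta r1 r2 aT aP brT brP π Y ρ)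
      = adAct aT aP κ ((brP Y) ∘ₗ ρ)
        - ∑ n, adAct aT aP κ ((adAct aT aP (r2 n) ρ) ∘ₗ brT (aT (r1 n) (π Y))) := by
    rw [delta_def]
    rw [show ∀ η : T →ₗ[k] P, adAct aT aP κ η = adActR aT aP κ η from fun _ => rfl]
    rw [map_sub, map_sum]
    simp
  rw [hL, adAct_brP_comp aT aP brP hPequiv κ r Y ρ]
  have hterm : ∀ n, adAct aT aP κ ((adAct aT aP (r2 n) ρ) ∘ₗ brT (aT (r1 n) (π Y)))
      = ∑ i ∈ r.index,
          (adAct aT aP (r.left i * r2 n) ρ) ∘ₗ brT (aT (r.right i * r1 n) (π Y)) := by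
    intro n
    rw [adAct_comp_brT aT aP haT1 haTm brT hTequiv κ r (adAct aT aP (r2 n) ρ) (aT (r1 n) (π Y))]
    refine Finset.sum_congr rfl fun i _ => ?_
    rw [← adAct_mul' aT aP haTm haPm (r.left i) (r2 n) ρ, haTm (r.right i) (r1 n)]
    rfl
  rw [Finset.sum_congr rfl fun n _ => hterm n]
  -- expand the right hand side
  have hR : ∀ i ∈ r.index,
      delta r1 r2 aT aP brT brP π (aP (r.left i) Y) (adAct aT aP (r.right i) ρ)
      = brP (aP (r.left i) Y) ∘ₗ adAct aT aP (r.right i) ρ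
        - ∑ n, (adAct aT aP (r2 n * r.right i) ρ) ∘ₗ
            brT (aT (r1 n * r.left i) (π Y)) := by
    intro i _
    rw [delta_def]
    congr 1
    refine Finset.sum_congr rfl fun n _ => ?_
    rw [adAct_mul' aT aP haTm haPm (r2 n) (r.right i) ρ, hπequiv (r.left i) Y,
      haTm (r1 n) (r.left i)]
    rfl
  rw [Finset.sum_congr rfl hR, Finset.sum_sub_distrib]
  congr 1
  -- the remaining identity is quasi-cocommutativity transported by a linear map
  have key := congrArg
    (TensorProduct.lift
      ((((LinearMap.llcomp k T T P) ∘ₗ (adActL aT aP ρ)).flip) ∘ₗ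
        (brT ∘ₗ ((aT).flip (π Y)))))
    (hqc κ)
  rw [← r.eq] at key
  simp only [map_sum, TensorProduct.comm_tmul, Finset.sum_mul_sum,
    Algebra.TensorProduct.tmul_mul_tmul, TensorProduct.lift.tmul, LinearMap.coe_comp,
    Function.comp_apply, LinearMap.flip_apply, LinearMap.llcomp_apply', adActL_apply] at key
  calc (∑ n, ∑ i ∈ r.index,
        (adAct aT aP (r.left i * r2 n) ρ) ∘ₗ brT (aT (r.right i * r1 n) (π Y)))
      = ∑ i ∈ r.index, ∑ n,
        (adAct aT aP (r.left i * r2 n) ρ) ∘ₗ brT (aT (r.right i * r1 n) (π Y)) :=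
        Finset.sum_comm
    _ = ∑ n, ∑ i ∈ r.index,
        (adAct aT aP (r2 n * r.right i) ρ) ∘ₗ brT (aT (r1 n * r.left i) (π Y)) := by
        rw [key]
    _ = ∑ i ∈ r.index, ∑ n,
        (adAct aT aP (r2 n * r.right i) ρ) ∘ₗ brT (aT (r1 n * r.left i) (π Y)) :=
        Finset.sum_comm

end DeltaAux


/-! ### R-matrix identities : a quantum Yang--Baxter type identity and collapses -/

section RmatAux

open Coalgebra

variable {ι : Type*} [Fintype ι]

lemma comm_comm (t : K ⊗[k] K) :
    (TensorProduct.comm k K K) ((TensorProduct.comm k K K) t) = t := by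
  induction t using TensorProduct.induction_on with
  | zero => simp
  | tmul a b => simp
  | add x y hx hy => simp [hx, hy]

lemma tri_collapse {V : Type*} [AddCommGroup V] [Module k V]
    (r1 r2 : ι → K)
    (htri₂ : (∑ i, r2 i ⊗ₜ[k] r1 i) * (∑ i, r1 i ⊗ₜ[k] r2 i) = 1)
    (Φ : K ⊗[k] K →ₗ[k] V) :
    (∑ p, ∑ m, Φ ((r2 p * r1 m) ⊗ₜ[k] (r1 p * r2 m))) = Φ (1 ⊗ₜ[k] 1) := by
  have h := congrArg Φ htri₂
  rw [Finset.sum_mul_sum] at h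
  simp only [Algebra.TensorProduct.tmul_mul_tmul] at h
  rw [Algebra.TensorProduct.one_def] at h
  simpa only [map_sum] using h

lemma sum_rot3 {M : Type*} [AddCommMonoid M] {a b c : Type*}
    (s : Finset a) (t : Finset b) (u : Finset c) (f : a → b → c → M) :
    (∑ x ∈ s, ∑ y ∈ t, ∑ z ∈ u, f x y z) = ∑ z ∈ u, ∑ y ∈ t, ∑ x ∈ s, f x y z := by
  calc (∑ x ∈ s, ∑ y ∈ t, ∑ z ∈ u, f x y z)
      = ∑ x ∈ s, ∑ z ∈ u, ∑ y ∈ t, f x y z :=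
        Finset.sum_congr rfl fun x _ => Finset.sum_comm
    _ = ∑ z ∈ u, ∑ x ∈ s, ∑ y ∈ t, f x y z := Finset.sum_comm
    _ = ∑ z ∈ u, ∑ y ∈ t, ∑ x ∈ s, f x y z :=
        Finset.sum_congr rfl fun z _ => Finset.sum_comm

set_option maxHeartbeats 1000000 in
lemma qybe (r1 r2 : ι → K)
    (hqc : ∀ x : K,
      (TensorProduct.comm k K K) (Coalgebra.comul (R := k) x) * (∑ i, r1 i ⊗ₜ[k] r2 i)
        = (∑ i, r1 i ⊗ₜ[k] r2 i) * Coalgebra.comul (R := k) x)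
    (hhex₂ : (∑ i, r1 i ⊗ₜ[k] Coalgebra.comul (R := k) (r2 i))
      = (∑ i, r1 i ⊗ₜ[k] ((1 : K) ⊗ₜ[k] r2 i)) * (∑ i, r1 i ⊗ₜ[k] (r2 i ⊗ₜ[k] (1 : K)))) :
    (∑ m, ∑ i, ∑ j, (r2 j * r2 i) ⊗ₜ[k] ((r1 j * r2 m) ⊗ₜ[k] (r1 i * r1 m)))
      = ∑ j, ∑ i, ∑ m, (r2 i * r2 j) ⊗ₜ[k] ((r2 m * r1 j) ⊗ₜ[k] (r1 m * r1 i)) := by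
  classical
  -- swapped quasi-cocommutativity
  have F2 : ∀ x : K,
      Coalgebra.comul (R := k) x * (∑ j, r2 j ⊗ₜ[k] r1 j)
        = (∑ j, r2 j ⊗ₜ[k] r1 j) *
            (TensorProduct.comm k K K) (Coalgebra.comul (R := k) x) := by
    intro x
    have h := congrArg (Algebra.TensorProduct.comm k K K) (hqc x)
    have hc : ∀ t : K ⊗[k] K, (Algebra.TensorProduct.comm k K K) t
        = (TensorProduct.comm k K K) t := fun t => rfl
    simp only [map_mul, map_sum] at h
    simp only [hc, comm_comm, Algebra.TensorProduct.comm_tmul] at h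
    exact h
  -- the two transported hexagon identities
  have P2 : (∑ i, (Coalgebra.comul (R := k) (r2 i)) ⊗ₜ[k] r1 i)
      = (∑ m, ((1 : K) ⊗ₜ[k] r2 m) ⊗ₜ[k] r1 m) * (∑ i, (r2 i ⊗ₜ[k] (1 : K)) ⊗ₜ[k] r1 i) := by
    have h := congrArg (Algebra.TensorProduct.comm k K (K ⊗[k] K)) hhex₂
    simp only [map_mul, map_sum] at h
    simpa only [Algebra.TensorProduct.comm_tmul] using h
  have P1 : (∑ i, ((TensorProduct.comm k K K) (Coalgebra.comul (R := k) (r2 i))) ⊗ₜ[k] r1 i)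
      = (∑ i, (r2 i ⊗ₜ[k] (1 : K)) ⊗ₜ[k] r1 i) * (∑ m, ((1 : K) ⊗ₜ[k] r2 m) ⊗ₜ[k] r1 m) := by
    have h := congrArg (Algebra.TensorProduct.congr
      (Algebra.TensorProduct.comm k K K) (AlgEquiv.refl (A₁ := K) (R := k))) P2
    simp only [map_mul, map_sum] at h
    simp only [Algebra.TensorProduct.congr_apply, Algebra.TensorProduct.map_tmul,
      Algebra.TensorProduct.comm_tmul, AlgEquiv.coe_refl, AlgHom.coe_coe, AlgEquiv.coe_toAlgHom, id_eq] at h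
    have hc : ∀ t : K ⊗[k] K, (Algebra.TensorProduct.comm k K K) t
        = (TensorProduct.comm k K K) t := fun t => rfl
    simpa only [hc] using h
  -- the chain
  have chain : ((∑ j, r2 j ⊗ₜ[k] r1 j) ⊗ₜ[k] (1 : K)) *
        ((∑ i, (r2 i ⊗ₜ[k] (1 : K)) ⊗ₜ[k] r1 i) * (∑ m, ((1 : K) ⊗ₜ[k] r2 m) ⊗ₜ[k] r1 m))
      = ((∑ m, ((1 : K) ⊗ₜ[k] r2 m) ⊗ₜ[k] r1 m) * (∑ i, (r2 i ⊗ₜ[k] (1 : K)) ⊗ₜ[k] r1 i)) *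
          ((∑ j, r2 j ⊗ₜ[k] r1 j) ⊗ₜ[k] (1 : K)) := by
    rw [← P1, ← P2, Finset.mul_sum, Finset.sum_mul]
    refine Finset.sum_congr rfl fun i _ => ?_
    rw [Algebra.TensorProduct.tmul_mul_tmul, Algebra.TensorProduct.tmul_mul_tmul,
      one_mul, mul_one, F2 (r2 i)]
  have chain' := chain
  simp only [TensorProduct.sum_tmul, Finset.sum_mul, Finset.mul_sum,
    Algebra.TensorProduct.tmul_mul_tmul, one_mul, mul_one] at chain'
  have h := congrArg (Algebra.TensorProduct.assoc k k k K K K) chain'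
  simp only [map_sum, Algebra.TensorProduct.assoc_tmul] at h
  exact h

end RmatAux

set_option maxHeartbeats 4000000 in
set_option synthInstance.maxHeartbeats 400000 in
theorem delta_is_braided_action
    {ι B T P : Type*} [Fintype ι]
    [Ring B] [Algebra k B] [AddCommGroup T] [Module k T] [AddCommGroup P] [Module k P]
    -- the components of the `R`-matrix `R = Σ_i r1 i ⊗ r2 i = R^α ⊗ R_α`
    (r1 r2 : ι → K)
    -- triangular structure of `(K, R)`
    (hqc : ∀ x : K,
      (TensorProduct.comm k K K) (Coalgebra.comul (R := k) x) * (∑ i, r1 i ⊗ₜ[k] r2 i)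
        = (∑ i, r1 i ⊗ₜ[k] r2 i) * Coalgebra.comul (R := k) x)
    (hhex₁ : (∑ i, (TensorProduct.assoc k K K K) ((Coalgebra.comul (R := k) (r1 i)) ⊗ₜ[k] r2 i))
      = (∑ i, r1 i ⊗ₜ[k] ((1 : K) ⊗ₜ[k] r2 i)) * (∑ i, (1 : K) ⊗ₜ[k] (r1 i ⊗ₜ[k] r2 i)))
    (hhex₂ : (∑ i, r1 i ⊗ₜ[k] Coalgebra.comul (R := k) (r2 i))
      = (∑ i, r1 i ⊗ₜ[k] ((1 : K) ⊗ₜ[k] r2 i)) * (∑ i, r1 i ⊗ₜ[k] (r2 i ⊗ₜ[k] (1 : K))))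
    (htri₁ : (∑ i, r1 i ⊗ₜ[k] r2 i) * (∑ i, r2 i ⊗ₜ[k] r1 i) = 1)
    (htri₂ : (∑ i, r2 i ⊗ₜ[k] r1 i) * (∑ i, r1 i ⊗ₜ[k] r2 i) = 1)
    -- `K`-actions on `B`, `T`, `P`
    (aB : K →ₗ[k] Module.End k B)
    (haB1 : aB 1 = 1) (haBm : ∀ x y : K, aB (x * y) = aB x * aB y)
    (aT : K →ₗ[k] Module.End k T)
    (haT1 : aT 1 = 1) (haTm : ∀ x y : K, aT (x * y) = aT x * aT y)
    (aP : K →ₗ[k] Module.End k P)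
    (haP1 : aP 1 = 1) (haPm : ∀ x y : K, aP (x * y) = aP x * aP y)
    -- `B` is a quasi-commutative `K`-module algebra
    (hBmodalg : ∀ (κ : K) (b b' : B),
      aB κ (b * b') = mulAct aB b b' (Coalgebra.comul (R := k) κ))
    (hBunit : ∀ κ : K, aB κ (1 : B) = Coalgebra.counit (R := k) κ • (1 : B))
    (hBqc : ∀ b b' : B, b * b' = ∑ i, aB (r2 i) b' * aB (r1 i) b)
    -- the braided Lie algebra structures of `T` and `P`
    (brT : T →ₗ[k] T →ₗ[k] T)
    (hTequiv : ∀ (κ : K) (u v : T),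
      aT κ (brT u v) = brAct aT brT u v (Coalgebra.comul (R := k) κ))
    (hTanti : ∀ u v : T, brT u v = - ∑ i, brT (aT (r2 i) v) (aT (r1 i) u))
    (hTjac : ∀ u v w : T,
      brT u (brT v w) = brT (brT u v) w + ∑ i, brT (aT (r2 i) v) (brT (aT (r1 i) u) w))
    (brP : P →ₗ[k] P →ₗ[k] P)
    (hPequiv : ∀ (κ : K) (u v : P),
      aP κ (brP u v) = brAct aP brP u v (Coalgebra.comul (R := k) κ))
    (hPanti : ∀ u v : P, brP u v = - ∑ i, brP (aP (r2 i) v) (aP (r1 i) u))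
    (hPjac : ∀ u v w : P,
      brP u (brP v w) = brP (brP u v) w + ∑ i, brP (aP (r2 i) v) (brP (aP (r1 i) u) w))
    -- the `B`-bimodule structures (left actions; right actions via `rMod`)
    (lT : B →ₗ[k] Module.End k T)
    (hlT1 : lT 1 = 1) (hlTm : ∀ b b' : B, lT (b * b') = lT b * lT b')
    (lP : B →ₗ[k] Module.End k P)
    (hlP1 : lP 1 = 1) (hlPm : ∀ b b' : B, lP (b * b') = lP b * lP b')
    -- `T` acts on `B` by braided derivations (`T = Der^R(B)`)
    (actTB : T →ₗ[k] B →ₗ[k] B)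
    (hDer : ∀ (X : T) (b b' : B),
      actTB X (b * b') = actTB X b * b' + ∑ i, aB (r2 i) b * actTB (aT (r1 i) X) b')
    (hDercomp : ∀ (b : B) (X : T) (b' : B), actTB (lT b X) b' = b * actTB X b')
    -- `π : P → T` is a `K`-equivariant, `B`-linear morphism of braided Lie algebras
    (π : P →ₗ[k] T)
    (hπequiv : ∀ (κ : K) (Y : P), π (aP κ Y) = aT κ (π Y))
    (hπbr : ∀ Y Y' : P, π (brP Y Y') = brT (π Y) (π Y'))
    (hπlin : ∀ (b : B) (Y : P), π (lP b Y) = lT b (π Y))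
    (hπrlin : ∀ (Y : P) (b : B),
      π (rMod r1 r2 aB lP aP Y b) = rMod r1 r2 aB lT aT (π Y) b)
    -- braided Lie–Rinehart compatibility for `(B,T)` and for `(B,P)`
    -- (`P` acts on `B` through `π`)
    (hLRT : ∀ (X : T) (b : B) (X' : T),
      brT X (lT b X') = lT (actTB X b) X' + ∑ i, lT (aB (r2 i) b) (brT (aT (r1 i) X) X'))
    (hLRP : ∀ (Y : P) (b : B) (Y' : P),
      brP Y (lP b Y') = lP (actTB (π Y) b) Y'
        + ∑ i, lP (aB (r2 i) b) (brP (aP (r1 i) Y) Y')) :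
    -- the map `δ` is an action of the braided Lie algebra `P` on `Hom_B(T,P)`:
    -- (i) `K`-equivariance: `κ ▷ (δ_Y ρ) = δ_{κ₍₁₎▷Y}(κ₍₂₎▷ρ)`
    (∀ (κ : K) (Y : P) (ρ : T →ₗ[k] P),
      (∀ (X : T) (b : B), ρ (rMod r1 r2 aB lT aT X b) = rMod r1 r2 aB lP aP (ρ X) b) →
      adAct aT aP κ (delta r1 r2 aT aP brT brP π Y ρ)
        = deltaAct r1 r2 aT aP brT brP π Y ρ (Coalgebra.comul (R := k) κ)) ∧
    -- (ii) `δ_{[Y,Y']} = δ_Y ∘ δ_{Y'} − δ_{R_α▷Y'} ∘ δ_{R^α▷Y}`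
    (∀ (Y Y' : P) (ρ : T →ₗ[k] P),
      (∀ (X : T) (b : B), ρ (rMod r1 r2 aB lT aT X b) = rMod r1 r2 aB lP aP (ρ X) b) →
      delta r1 r2 aT aP brT brP π (brP Y Y') ρ
        = delta r1 r2 aT aP brT brP π Y (delta r1 r2 aT aP brT brP π Y' ρ)
          - ∑ i, delta r1 r2 aT aP brT brP π (aP (r2 i) Y')
              (delta r1 r2 aT aP brT brP π (aP (r1 i) Y) ρ)) := by
  classical
  have hAD : ∀ (c : K) (W : P) (σ : T →ₗ[k] P),
      adAct aT aP c (delta r1 r2 aT aP brT brP π W σ)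
        = deltaAct r1 r2 aT aP brT brP π W σ (Coalgebra.comul (R := k) c) := by
    intro c W σ
    rw [deltaAct_comul r1 r2 aT aP brT brP π W σ c (Coalgebra.Repr.arbitrary k c)]
    exact delta_equivariant r1 r2 hqc aT haT1 haTm aP haPm brT hTequiv brP hPequiv π
      hπequiv c (Coalgebra.Repr.arbitrary k c) W σ
  constructor
  · intro κ Y ρ _
    exact hAD κ Y ρ
  · intro Y Y' ρ _
    apply LinearMap.ext
    intro X
    simp only [LinearMap.sub_apply, LinearMap.sum_apply]
    -- Jacobi identities, pointwise, in subtraction form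
    have hJacP : brP (brP Y Y') (ρ X)
        = brP Y (brP Y' (ρ X))
          - ∑ m, brP (aP (r2 m) Y') (brP (aP (r1 m) Y) (ρ X)) :=
      eq_sub_of_add_eq (hPjac Y Y' (ρ X)).symm
    have hJacT : ∀ u v : T, brT (brT u v) X
        = brT u (brT v X) - ∑ m, brT (aT (r2 m) v) (brT (aT (r1 m) u) X) :=
      fun u v => eq_sub_of_add_eq (hTjac u v X).symm
    -- the first hexagon identity, transported
    have haux1 : ∀ (c : K) (t : K ⊗[k] K),
        (TensorProduct.lift (adActL aT aP ρ) ∘ₗ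
          LinearMap.lTensor K
            (((LinearMap.flip brT) X) ∘ₗ TensorProduct.lift brT ∘ₗ
              TensorProduct.map ((aT).flip (π Y)) ((aT).flip (π Y'))) ∘ₗ
          (TensorProduct.assoc k K K K).toLinearMap ∘ₗ
          (LinearMap.rTensor K (TensorProduct.comm k K K).toLinearMap) ∘ₗ
          (TensorProduct.assoc k K K K).symm.toLinearMap ∘ₗ
          (LinearMap.lTensor K (TensorProduct.comm k K K).toLinearMap))
          ((TensorProduct.assoc k K K K) (t ⊗ₜ[k] c))
        = (adAct aT aP c ρ) (brT (brAct aT brT (π Y) (π Y') t) X) := by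
      intro c t
      induction t using TensorProduct.induction_on with
      | zero =>
          simp only [TensorProduct.zero_tmul, map_zero, LinearMap.zero_apply]
      | tmul a b =>
          simp only [brAct, LinearMap.coe_comp, Function.comp_apply,
            TensorProduct.assoc_tmul, LinearEquiv.coe_coe, LinearMap.lTensor_tmul,
            TensorProduct.comm_tmul, TensorProduct.assoc_symm_tmul,
            LinearMap.rTensor_tmul, TensorProduct.map_tmul, TensorProduct.lift.tmul,
            LinearMap.flip_apply, adActL_apply, LinearMap.mk₂_apply]
      | add s t hs ht =>
          simp only [TensorProduct.add_tmul, map_add, LinearMap.add_apply, hs, ht]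
    have hLhex : (∑ i, (adAct aT aP (r2 i) ρ) (brT (aT (r1 i) (brT (π Y) (π Y'))) X))
        = ∑ i, ∑ j, (adAct aT aP (r2 i * r2 j) ρ)
            (brT (brT (aT (r1 i) (π Y)) (aT (r1 j) (π Y'))) X) := by
      have h1 : ∀ i : ι, (adAct aT aP (r2 i) ρ) (brT (aT (r1 i) (brT (π Y) (π Y'))) X)
          = (TensorProduct.lift (adActL aT aP ρ) ∘ₗ
              LinearMap.lTensor K
                (((LinearMap.flip brT) X) ∘ₗ TensorProduct.lift brT ∘ₗ
                  TensorProduct.map ((aT).flip (π Y)) ((aT).flip (π Y'))) ∘ₗ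
              (TensorProduct.assoc k K K K).toLinearMap ∘ₗ
              (LinearMap.rTensor K (TensorProduct.comm k K K).toLinearMap) ∘ₗ
              (TensorProduct.assoc k K K K).symm.toLinearMap ∘ₗ
              (LinearMap.lTensor K (TensorProduct.comm k K K).toLinearMap))
              ((TensorProduct.assoc k K K K)
                ((Coalgebra.comul (R := k) (r1 i)) ⊗ₜ[k] r2 i)) := by
        intro i
        rw [hTequiv (r1 i) (π Y) (π Y'), haux1 (r2 i) (Coalgebra.comul (R := k) (r1 i))]
      rw [Finset.sum_congr rfl fun i _ => h1 i,
        ← map_sum (TensorProduct.lift (adActL aT aP ρ) ∘ₗ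
            LinearMap.lTensor K
              (((LinearMap.flip brT) X) ∘ₗ TensorProduct.lift brT ∘ₗ
                TensorProduct.map ((aT).flip (π Y)) ((aT).flip (π Y'))) ∘ₗ
            (TensorProduct.assoc k K K K).toLinearMap ∘ₗ
            (LinearMap.rTensor K (TensorProduct.comm k K K).toLinearMap) ∘ₗ
            (TensorProduct.assoc k K K K).symm.toLinearMap ∘ₗ
            (LinearMap.lTensor K (TensorProduct.comm k K K).toLinearMap))
          (fun i => (TensorProduct.assoc k K K K)
            ((Coalgebra.comul (R := k) (r1 i)) ⊗ₜ[k] r2 i)) Finset.univ,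
        hhex₁, Finset.sum_mul_sum]
      simp only [map_sum, Algebra.TensorProduct.tmul_mul_tmul, one_mul, mul_one,
        LinearMap.coe_comp, Function.comp_apply, LinearEquiv.coe_coe,
        LinearMap.lTensor_tmul, TensorProduct.comm_tmul, TensorProduct.assoc_symm_tmul,
        LinearMap.rTensor_tmul, TensorProduct.assoc_tmul, TensorProduct.map_tmul,
        TensorProduct.lift.tmul, LinearMap.flip_apply, adActL_apply]
    have hS1JT : (∑ i, ∑ j, (adAct aT aP (r2 i * r2 j) ρ)
          (brT (brT (aT (r1 i) (π Y)) (aT (r1 j) (π Y'))) X))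
        = (∑ i, ∑ j, (adAct aT aP (r2 i * r2 j) ρ)
            (brT (aT (r1 i) (π Y)) (brT (aT (r1 j) (π Y')) X)))
          - ∑ i, ∑ j, ∑ m, (adAct aT aP (r2 i * r2 j) ρ)
              (brT (aT (r2 m * r1 j) (π Y')) (brT (aT (r1 m * r1 i) (π Y)) X)) := by
      have perij : ∀ i j : ι, (adAct aT aP (r2 i * r2 j) ρ)
            (brT (brT (aT (r1 i) (π Y)) (aT (r1 j) (π Y'))) X)
          = (adAct aT aP (r2 i * r2 j) ρ)
              (brT (aT (r1 i) (π Y)) (brT (aT (r1 j) (π Y')) X))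
            - ∑ m, (adAct aT aP (r2 i * r2 j) ρ)
                (brT (aT (r2 m * r1 j) (π Y')) (brT (aT (r1 m * r1 i) (π Y)) X)) := by
        intro i j
        rw [hJacT, map_sub, map_sum]
        congr 1
        refine Finset.sum_congr rfl fun m _ => ?_
        rw [haTm (r2 m) (r1 j), haTm (r1 m) (r1 i)]
        rfl
      rw [Finset.sum_congr rfl fun i _ => Finset.sum_congr rfl fun j _ => perij i j]
      rw [Finset.sum_congr rfl fun i _ => Finset.sum_sub_distrib _ _, Finset.sum_sub_distrib]
    have E1 : delta r1 r2 aT aP brT brP π (brP Y Y') ρ X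
        = brP Y (brP Y' (ρ X))
          - (∑ m, brP (aP (r2 m) Y') (brP (aP (r1 m) Y) (ρ X)))
          - (∑ i, ∑ j, (adAct aT aP (r2 i * r2 j) ρ)
              (brT (aT (r1 i) (π Y)) (brT (aT (r1 j) (π Y')) X)))
          + ∑ i, ∑ j, ∑ m, (adAct aT aP (r2 i * r2 j) ρ)
              (brT (aT (r2 m * r1 j) (π Y')) (brT (aT (r1 m * r1 i) (π Y)) X)) := by
      rw [delta_apply, hπbr Y Y', hJacP, hLhex, hS1JT]
      abel
    -- expansion of the first term of the right hand side
    have EA1 : brP Y ((delta r1 r2 aT aP brT brP π Y' ρ) X)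
        = brP Y (brP Y' (ρ X))
          - ∑ j, brP Y ((adAct aT aP (r2 j) ρ) (brT (aT (r1 j) (π Y')) X)) := by
      rw [delta_apply, map_sub, map_sum]
    have EA2 : (∑ i, (adAct aT aP (r2 i) (delta r1 r2 aT aP brT brP π Y' ρ))
          (brT (aT (r1 i) (π Y)) X))
        = ∑ i, ∑ j, (delta r1 r2 aT aP brT brP π (aP (r2 j) Y') (adAct aT aP (r2 i) ρ))
            (brT (aT (r1 i * r1 j) (π Y)) X) := by
      have h1 : ∀ i : ι, (adAct aT aP (r2 i) (delta r1 r2 aT aP brT brP π Y' ρ))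
            (brT (aT (r1 i) (π Y)) X)
          = (TensorProduct.lift ((LinearMap.id (R := k) (M := T →ₗ[k] P)).flip) ∘ₗ
              TensorProduct.map (((LinearMap.flip brT) X) ∘ₗ ((aT).flip (π Y)))
                (deltaAct r1 r2 aT aP brT brP π Y' ρ))
              (r1 i ⊗ₜ[k] (Coalgebra.comul (R := k) (r2 i))) := by
        intro i
        rw [hAD (r2 i) Y' ρ]
        simp only [LinearMap.coe_comp, Function.comp_apply, TensorProduct.map_tmul,
          TensorProduct.lift.tmul, LinearMap.flip_apply, LinearMap.id_coe, id_eq]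
      rw [Finset.sum_congr rfl fun i _ => h1 i,
        ← map_sum (TensorProduct.lift ((LinearMap.id (R := k) (M := T →ₗ[k] P)).flip) ∘ₗ
            TensorProduct.map (((LinearMap.flip brT) X) ∘ₗ ((aT).flip (π Y)))
              (deltaAct r1 r2 aT aP brT brP π Y' ρ))
          (fun i => r1 i ⊗ₜ[k] (Coalgebra.comul (R := k) (r2 i))) Finset.univ,
        hhex₂, Finset.sum_mul_sum]
      simp only [map_sum, Algebra.TensorProduct.tmul_mul_tmul, one_mul, mul_one,
        TensorProduct.map_tmul, TensorProduct.lift.tmul, LinearMap.coe_comp,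
        Function.comp_apply, LinearMap.flip_apply, LinearMap.id_coe, id_eq,
        deltaAct_tmul]
    have EA2' : (∑ i, ∑ j, (delta r1 r2 aT aP brT brP π (aP (r2 j) Y')
            (adAct aT aP (r2 i) ρ)) (brT (aT (r1 i * r1 j) (π Y)) X))
        = (∑ i, ∑ j, brP (aP (r2 j) Y')
              ((adAct aT aP (r2 i) ρ) (brT (aT (r1 i * r1 j) (π Y)) X)))
          - ∑ i, ∑ j, ∑ l, (adAct aT aP (r2 l * r2 i) ρ)
              (brT (aT (r1 l * r2 j) (π Y'))
                (brT (aT (r1 i * r1 j) (π Y)) X)) := by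
      have perij : ∀ i j : ι, (delta r1 r2 aT aP brT brP π (aP (r2 j) Y')
            (adAct aT aP (r2 i) ρ)) (brT (aT (r1 i * r1 j) (π Y)) X)
          = brP (aP (r2 j) Y')
              ((adAct aT aP (r2 i) ρ) (brT (aT (r1 i * r1 j) (π Y)) X))
            - ∑ l, (adAct aT aP (r2 l * r2 i) ρ)
                (brT (aT (r1 l * r2 j) (π Y'))
                  (brT (aT (r1 i * r1 j) (π Y)) X)) := by
        intro i j
        rw [delta_apply, hπequiv (r2 j) Y']
        congr 1
        refine Finset.sum_congr rfl fun l _ => ?_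
        rw [adAct_mul' aT aP haTm haPm (r2 l) (r2 i) ρ, haTm (r1 l) (r2 j)]
        rfl
      rw [Finset.sum_congr rfl fun i _ => Finset.sum_congr rfl fun j _ => perij i j]
      rw [Finset.sum_congr rfl fun i _ => Finset.sum_sub_distrib _ _, Finset.sum_sub_distrib]
    -- expansion of the second term of the right hand side
    have EB1 : ∀ m : ι, brP (aP (r2 m) Y')
          ((delta r1 r2 aT aP brT brP π (aP (r1 m) Y) ρ) X)
        = brP (aP (r2 m) Y') (brP (aP (r1 m) Y) (ρ X))
          - ∑ j, brP (aP (r2 m) Y')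
              ((adAct aT aP (r2 j) ρ) (brT (aT (r1 j * r1 m) (π Y)) X)) := by
      intro m
      rw [delta_apply, hπequiv (r1 m) Y, map_sub, map_sum]
      congr 1
      refine Finset.sum_congr rfl fun j _ => ?_
      rw [haTm (r1 j) (r1 m)]
      rfl
    have EB2 : ∀ m : ι, (∑ n, (adAct aT aP (r2 n)
            (delta r1 r2 aT aP brT brP π (aP (r1 m) Y) ρ))
          (brT (aT (r1 n) (aT (r2 m) (π Y'))) X))
        = ∑ n, ∑ p, (delta r1 r2 aT aP brT brP π (aP (r2 p * r1 m) Y)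
            (adAct aT aP (r2 n) ρ)) (brT (aT ((r1 n * r1 p) * r2 m) (π Y')) X) := by
      intro m
      have h1 : ∀ n : ι, (adAct aT aP (r2 n)
            (delta r1 r2 aT aP brT brP π (aP (r1 m) Y) ρ))
            (brT (aT (r1 n) (aT (r2 m) (π Y'))) X)
          = (TensorProduct.lift ((LinearMap.id (R := k) (M := T →ₗ[k] P)).flip) ∘ₗ
              TensorProduct.map (((LinearMap.flip brT) X) ∘ₗ ((aT).flip (aT (r2 m) (π Y'))))
                (deltaAct r1 r2 aT aP brT brP π (aP (r1 m) Y) ρ))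
              (r1 n ⊗ₜ[k] (Coalgebra.comul (R := k) (r2 n))) := by
        intro n
        rw [hAD (r2 n) (aP (r1 m) Y) ρ]
        simp only [LinearMap.coe_comp, Function.comp_apply, TensorProduct.map_tmul,
          TensorProduct.lift.tmul, LinearMap.flip_apply, LinearMap.id_coe, id_eq]
      rw [Finset.sum_congr rfl fun n _ => h1 n,
        ← map_sum (TensorProduct.lift ((LinearMap.id (R := k) (M := T →ₗ[k] P)).flip) ∘ₗ
            TensorProduct.map (((LinearMap.flip brT) X) ∘ₗ ((aT).flip (aT (r2 m) (π Y'))))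
              (deltaAct r1 r2 aT aP brT brP π (aP (r1 m) Y) ρ))
          (fun n => r1 n ⊗ₜ[k] (Coalgebra.comul (R := k) (r2 n))) Finset.univ,
        hhex₂, Finset.sum_mul_sum]
      simp only [map_sum, Algebra.TensorProduct.tmul_mul_tmul, one_mul, mul_one,
        TensorProduct.map_tmul, TensorProduct.lift.tmul, LinearMap.coe_comp,
        Function.comp_apply, LinearMap.flip_apply, LinearMap.id_coe, id_eq,
        deltaAct_tmul]
      refine Finset.sum_congr rfl fun n _ => Finset.sum_congr rfl fun p _ => ?_
      rw [show aP (r2 p) ((aP (r1 m)) Y) = aP (r2 p * r1 m) Y by rw [haPm]; rfl,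
        show aT (r1 n * r1 p) ((aT (r2 m)) (π Y')) = aT ((r1 n * r1 p) * r2 m) (π Y') by
          rw [haTm (r1 n * r1 p) (r2 m)]; rfl]
    have EB2' : ∀ m : ι, (∑ n, ∑ p, (delta r1 r2 aT aP brT brP π (aP (r2 p * r1 m) Y)
            (adAct aT aP (r2 n) ρ)) (brT (aT ((r1 n * r1 p) * r2 m) (π Y')) X))
        = (∑ n, ∑ p, brP (aP (r2 p * r1 m) Y)
              ((adAct aT aP (r2 n) ρ) (brT (aT ((r1 n * r1 p) * r2 m) (π Y')) X)))
          - ∑ n, ∑ p, ∑ q, (adAct aT aP (r2 q * r2 n) ρ)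
              (brT (aT (r1 q * (r2 p * r1 m)) (π Y))
                (brT (aT ((r1 n * r1 p) * r2 m) (π Y')) X)) := by
      intro m
      have pernp : ∀ n p : ι, (delta r1 r2 aT aP brT brP π (aP (r2 p * r1 m) Y)
            (adAct aT aP (r2 n) ρ)) (brT (aT ((r1 n * r1 p) * r2 m) (π Y')) X)
          = brP (aP (r2 p * r1 m) Y)
              ((adAct aT aP (r2 n) ρ) (brT (aT ((r1 n * r1 p) * r2 m) (π Y')) X))
            - ∑ q, (adAct aT aP (r2 q * r2 n) ρ)
                (brT (aT (r1 q * (r2 p * r1 m)) (π Y))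
                  (brT (aT ((r1 n * r1 p) * r2 m) (π Y')) X)) := by
        intro n p
        rw [delta_apply, hπequiv (r2 p * r1 m) Y]
        congr 1
        refine Finset.sum_congr rfl fun q _ => ?_
        rw [adAct_mul' aT aP haTm haPm (r2 q) (r2 n) ρ, haTm (r1 q) (r2 p * r1 m)]
        rfl
      rw [Finset.sum_congr rfl fun n _ => Finset.sum_congr rfl fun p _ => pernp n p]
      rw [Finset.sum_congr rfl fun n _ => Finset.sum_sub_distrib _ _, Finset.sum_sub_distrib]
    -- collapses using the triangularity
    have C6A : (∑ m, ∑ n, ∑ p, brP (aP (r2 p * r1 m) Y)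
          ((adAct aT aP (r2 n) ρ) (brT (aT ((r1 n * r1 p) * r2 m) (π Y')) X)))
        = ∑ n, brP Y ((adAct aT aP (r2 n) ρ) (brT (aT (r1 n) (π Y')) X)) := by
      rw [Finset.sum_comm]
      refine Finset.sum_congr rfl fun n _ => ?_
      rw [Finset.sum_comm]
      have h := tri_collapse r1 r2 htri₂
        (TensorProduct.lift brP ∘ₗ TensorProduct.map ((aP).flip Y)
          ((adAct aT aP (r2 n) ρ) ∘ₗ ((LinearMap.flip brT) X) ∘ₗ
            ((aT).flip (π Y')) ∘ₗ (LinearMap.mulLeft k (r1 n))))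
      simp only [TensorProduct.lift.tmul, TensorProduct.map_tmul, LinearMap.coe_comp,
        Function.comp_apply, LinearMap.flip_apply, LinearMap.mulLeft_apply, mul_one,
        haP1, Module.End.one_apply] at h
      rw [← h]
      refine Finset.sum_congr rfl fun p _ => Finset.sum_congr rfl fun m _ => ?_
      rw [mul_assoc]
    have C6B : (∑ m, ∑ n, ∑ p, ∑ q, (adAct aT aP (r2 q * r2 n) ρ)
          (brT (aT (r1 q * (r2 p * r1 m)) (π Y))
            (brT (aT ((r1 n * r1 p) * r2 m) (π Y')) X)))
        = ∑ n, ∑ q, (adAct aT aP (r2 q * r2 n) ρ)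
            (brT (aT (r1 q) (π Y)) (brT (aT (r1 n) (π Y')) X)) := by
      rw [Finset.sum_comm]
      refine Finset.sum_congr rfl fun n _ => ?_
      rw [sum_rot3]
      refine Finset.sum_congr rfl fun q _ => ?_
      have h := tri_collapse r1 r2 htri₂
        ((adAct aT aP (r2 q * r2 n) ρ) ∘ₗ TensorProduct.lift brT ∘ₗ TensorProduct.map
          (((aT).flip (π Y)) ∘ₗ (LinearMap.mulLeft k (r1 q)))
          ((((LinearMap.flip brT) X) ∘ₗ ((aT).flip (π Y'))) ∘ₗ (LinearMap.mulLeft k (r1 n))))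
      simp only [TensorProduct.lift.tmul, TensorProduct.map_tmul, LinearMap.coe_comp,
        Function.comp_apply, LinearMap.flip_apply, LinearMap.mulLeft_apply, mul_one] at h
      rw [← h]
      refine Finset.sum_congr rfl fun p _ => Finset.sum_congr rfl fun m _ => ?_
      rw [mul_assoc (r1 n) (r1 p) (r2 m)]
    -- the Yang--Baxter step
    have E4 : (∑ i, ∑ j, ∑ m, (adAct aT aP (r2 i * r2 j) ρ)
          (brT (aT (r2 m * r1 j) (π Y')) (brT (aT (r1 m * r1 i) (π Y)) X)))
        = ∑ i, ∑ j, ∑ l, (adAct aT aP (r2 l * r2 i) ρ)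
            (brT (aT (r1 l * r2 j) (π Y')) (brT (aT (r1 i * r1 j) (π Y)) X)) := by
      have h := congrArg
        (TensorProduct.lift (adActL aT aP ρ) ∘ₗ LinearMap.lTensor K
          (TensorProduct.lift brT ∘ₗ TensorProduct.map ((aT).flip (π Y'))
            (((LinearMap.flip brT) X) ∘ₗ ((aT).flip (π Y)))))
        (qybe r1 r2 hqc hhex₂)
      simp only [map_sum, LinearMap.coe_comp, Function.comp_apply, LinearMap.lTensor_tmul,
        TensorProduct.map_tmul, TensorProduct.lift.tmul, LinearMap.flip_apply,
        adActL_apply] at h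
      calc (∑ i, ∑ j, ∑ m, (adAct aT aP (r2 i * r2 j) ρ)
            (brT (aT (r2 m * r1 j) (π Y')) (brT (aT (r1 m * r1 i) (π Y)) X)))
          = ∑ j, ∑ i, ∑ m, (adAct aT aP (r2 i * r2 j) ρ)
              (brT (aT (r2 m * r1 j) (π Y')) (brT (aT (r1 m * r1 i) (π Y)) X)) :=
            Finset.sum_comm
        _ = ∑ m, ∑ i, ∑ j, (adAct aT aP (r2 j * r2 i) ρ)
              (brT (aT (r1 j * r2 m) (π Y')) (brT (aT (r1 i * r1 m) (π Y)) X)) := h.symm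
        _ = ∑ i, ∑ m, ∑ j, (adAct aT aP (r2 j * r2 i) ρ)
              (brT (aT (r1 j * r2 m) (π Y')) (brT (aT (r1 i * r1 m) (π Y)) X)) :=
            Finset.sum_comm
    -- assembling everything
    have hDY : (delta r1 r2 aT aP brT brP π Y
          (delta r1 r2 aT aP brT brP π Y' ρ)) X
        = (brP Y (brP Y' (ρ X))
            - ∑ j, brP Y ((adAct aT aP (r2 j) ρ) (brT (aT (r1 j) (π Y')) X)))
          - ((∑ i, ∑ j, brP (aP (r2 j) Y')
                ((adAct aT aP (r2 i) ρ) (brT (aT (r1 i * r1 j) (π Y)) X)))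
            - ∑ i, ∑ j, ∑ l, (adAct aT aP (r2 l * r2 i) ρ)
                (brT (aT (r1 l * r2 j) (π Y'))
                  (brT (aT (r1 i * r1 j) (π Y)) X))) := by
      rw [delta_apply, EA1, EA2, EA2']
    have hDB : (∑ m, (delta r1 r2 aT aP brT brP π (aP (r2 m) Y')
          (delta r1 r2 aT aP brT brP π (aP (r1 m) Y) ρ)) X)
        = ((∑ m, brP (aP (r2 m) Y') (brP (aP (r1 m) Y) (ρ X)))
            - ∑ m, ∑ j, brP (aP (r2 m) Y')
                ((adAct aT aP (r2 j) ρ) (brT (aT (r1 j * r1 m) (π Y)) X)))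
          - ((∑ n, brP Y ((adAct aT aP (r2 n) ρ) (brT (aT (r1 n) (π Y')) X)))
            - ∑ n, ∑ q, (adAct aT aP (r2 q * r2 n) ρ)
                (brT (aT (r1 q) (π Y)) (brT (aT (r1 n) (π Y')) X))) := by
      have expand : ∀ m : ι, (delta r1 r2 aT aP brT brP π (aP (r2 m) Y')
            (delta r1 r2 aT aP brT brP π (aP (r1 m) Y) ρ)) X
          = (brP (aP (r2 m) Y') (brP (aP (r1 m) Y) (ρ X))
              - ∑ j, brP (aP (r2 m) Y')
                  ((adAct aT aP (r2 j) ρ) (brT (aT (r1 j * r1 m) (π Y)) X)))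
            - ((∑ n, ∑ p, brP (aP (r2 p * r1 m) Y)
                  ((adAct aT aP (r2 n) ρ) (brT (aT ((r1 n * r1 p) * r2 m) (π Y')) X)))
              - ∑ n, ∑ p, ∑ q, (adAct aT aP (r2 q * r2 n) ρ)
                  (brT (aT (r1 q * (r2 p * r1 m)) (π Y))
                    (brT (aT ((r1 n * r1 p) * r2 m) (π Y')) X))) := by
        intro m
        rw [delta_apply, EB1 m, hπequiv (r2 m) Y', EB2 m, EB2' m]
      rw [Finset.sum_congr rfl fun m _ => expand m, Finset.sum_sub_distrib,
        Finset.sum_sub_distrib, Finset.sum_sub_distrib, C6A, C6B]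
    rw [E1, hDY, hDB, E4]
    have hB6 : (∑ n, ∑ q, (adAct aT aP (r2 q * r2 n) ρ)
          (brT (aT (r1 q) (π Y)) (brT (aT (r1 n) (π Y')) X)))
        = ∑ i, ∑ j, (adAct aT aP (r2 i * r2 j) ρ)
            (brT (aT (r1 i) (π Y)) (brT (aT (r1 j) (π Y')) X)) :=
      Finset.sum_comm
    have hA3 : (∑ i, ∑ j, brP (aP (r2 j) Y')
          ((adAct aT aP (r2 i) ρ) (brT (aT (r1 i * r1 j) (π Y)) X)))
        = ∑ m, ∑ j, brP (aP (r2 m) Y')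
            ((adAct aT aP (r2 j) ρ) (brT (aT (r1 j * r1 m) (π Y)) X)) :=
      Finset.sum_comm
    rw [hB6, hA3]
    abel

end Statement3
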